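/- Let T be a region on one side of the line through a segment B, and let Q ⊂ T be an antichain with respect to the order p ≺ q iff q ∈ conv(B ∪ {p}). Then for any two distinct points p, q ∈ Q, the line through p and q does not intersect the segment B. -/
import Mathlib


/-- Signed area determinant: positive iff `c` is to the left of the directed line `a → b`. -/
def det2 (a b c : ℝ × ℝ) : ℝ :=
  (b.1 - a.1) * (c.2 - a.2) - (b.2 - a.2) * (c.1 - a.1)

/-- A planar point set is in general position if no three of its points are collinear. -/
def GenPos (S : Set (ℝ × ℝ)) : Prop :=
  ∀ p ∈ S, ∀ q ∈ S, ∀ r ∈ S, p ≠ q → p ≠ r → q ≠ r →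
    ¬ Collinear ℝ ({p, q, r} : Set (ℝ × ℝ))

/-- A planar point set is in convex position if every point is a vertex of the convex hull,
i.e. no point lies in the convex hull of the others. -/
def ConvexPos (S : Set (ℝ × ℝ)) : Prop :=
  ∀ p ∈ S, p ∉ convexHull ℝ (S \ {p})

/-- If Q is an antichain with respect to p ≺ q iff q ∈ conv(B ∪ {p}) (Q lying strictly
on one side of the line through the segment B = [a,b], in general position with a, b),
then the line through any two distinct points of Q misses the segment B. -/
theorem stmt_17 (a b : ℝ × ℝ) (hab : a ≠ b) (Q : Finset (ℝ × ℝ))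
    (hside : (∀ p ∈ Q, 0 < det2 a b p) ∨ (∀ p ∈ Q, det2 a b p < 0))
    (hgp : GenPos ((Q : Set (ℝ × ℝ)) ∪ {a, b}))
    (hanti : ∀ p ∈ Q, ∀ q ∈ Q, p ≠ q → q ∉ convexHull ℝ (segment ℝ a b ∪ {p})) :
    ∀ p ∈ Q, ∀ q ∈ Q, p ≠ q →
      ∀ x ∈ segment ℝ a b, x ∉ affineSpan ℝ ({p, q} : Set (ℝ × ℝ)) := by
  intro p hp q hq hpq x hx hxline
  have hxline' : (x - p) +ᵥ p ∈ affineSpan ℝ ({p, q} : Set (ℝ × ℝ)) := by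
    simpa using hxline
  obtain ⟨r, hr⟩ := (vadd_left_mem_affineSpan_pair (k := ℝ)).mp hxline'
  have hr1 : r * (q.1 - p.1) = x.1 - p.1 := congrArg Prod.fst hr
  have hr2 : r * (q.2 - p.2) = x.2 - p.2 := congrArg Prod.snd hr
  have hx1 : x.1 = r * (q.1 - p.1) + p.1 := by linarith
  have hx2 : x.2 = r * (q.2 - p.2) + p.2 := by linarith
  obtain ⟨u, v, hu, hv, huv, heq⟩ := hx
  have he1 : u * a.1 + v * b.1 = x.1 := congrArg Prod.fst heq
  have he2 : u * a.2 + v * b.2 = x.2 := congrArg Prod.snd heq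
  have hdx : det2 a b x = 0 := by
    simp only [det2]
    linear_combination (a.1 - b.1) * he2 + (b.2 - a.2) * he1
      + (b.1 * a.2 - a.1 * b.2) * huv
  have hlin : (1 - r) * det2 a b p + r * det2 a b q = 0 := by
    rw [← hdx]; simp only [det2, hx1, hx2]; ring
  have hr' : r < 0 ∨ 1 < r := by
    by_contra hc
    push_neg at hc
    rcases hside with h | h
    · have hdp := h p hp
      have hdq := h q hq
      have hm : 0 < min (det2 a b p) (det2 a b q) := lt_min hdp hdq
      have h1 : (1 - r) * min (det2 a b p) (det2 a b q) ≤ (1 - r) * det2 a b p :=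
        mul_le_mul_of_nonneg_left (min_le_left _ _) (by linarith [hc.2])
      have h2 : r * min (det2 a b p) (det2 a b q) ≤ r * det2 a b q :=
        mul_le_mul_of_nonneg_left (min_le_right _ _) hc.1
      linarith
    · have hdp := h p hp
      have hdq := h q hq
      have hm : max (det2 a b p) (det2 a b q) < 0 := max_lt hdp hdq
      have h1 : (1 - r) * det2 a b p ≤ (1 - r) * max (det2 a b p) (det2 a b q) :=
        mul_le_mul_of_nonneg_left (le_max_left _ _) (by linarith [hc.2])
      have h2 : r * det2 a b q ≤ r * max (det2 a b p) (det2 a b q) :=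
        mul_le_mul_of_nonneg_left (le_max_right _ _) hc.1
      linarith
  have hxmem : x ∈ convexHull ℝ (segment ℝ a b ∪ {p}) :=
    subset_convexHull ℝ _ (Or.inl ⟨u, v, hu, hv, huv, heq⟩)
  have hxmemq : x ∈ convexHull ℝ (segment ℝ a b ∪ {q}) :=
    subset_convexHull ℝ _ (Or.inl ⟨u, v, hu, hv, huv, heq⟩)
  rcases hr' with hneg | hbig
  · -- p ∈ segment x q ⊆ conv(B ∪ {q})
    have h1r : (0:ℝ) < 1 - r := by linarith
    have hpseg : p ∈ segment ℝ x q := by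
      refine ⟨1 / (1 - r), -r / (1 - r), by positivity, ?_, ?_, ?_⟩
      · exact div_nonneg (by linarith) (le_of_lt h1r)
      · field_simp
        ring
      · apply Prod.ext
        · show (1/(1-r)) * x.1 + (-r/(1-r)) * q.1 = p.1
          rw [hx1]; field_simp; ring
        · show (1/(1-r)) * x.2 + (-r/(1-r)) * q.2 = p.2
          rw [hx2]; field_simp; ring
    exact hanti q hq p hp hpq.symm
      ((convex_convexHull ℝ _).segment_subset hxmemq
        (subset_convexHull ℝ _ (Or.inr rfl)) hpseg)
  · -- q ∈ segment x p ⊆ conv(B ∪ {p})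
    have hr0 : (0:ℝ) < r := by linarith
    have hqseg : q ∈ segment ℝ x p := by
      refine ⟨1 / r, 1 - 1 / r, by positivity, ?_, by ring, ?_⟩
      · rw [sub_nonneg]; rw [div_le_one hr0]; linarith
      · apply Prod.ext
        · show (1/r) * x.1 + (1 - 1/r) * p.1 = q.1
          rw [hx1]; field_simp; ring
        · show (1/r) * x.2 + (1 - 1/r) * p.2 = q.2
          rw [hx2]; field_simp; ring
    exact hanti p hp q hq hpq
      ((convex_convexHull ℝ _).segment_subset hxmem
        (subset_convexHull ℝ _ (Or.inr rfl)) hqseg)
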